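/- Let $\alpha \in (1,2)$ and define $\theta_\alpha(s,t) = \frac{\alpha-1}{\alpha}\cdot\frac{s-t}{s^{\alpha-1}-t^{\alpha-1}}$ for $s \neq t > 0$ and $\theta_\alpha(s,s) = \frac{1}{\alpha}s^{2-\alpha}$. Then $M_{\theta_\alpha} := \inf_{s,t>0} \frac{\theta_\alpha(s,s)+\theta_\alpha(t,t)}{2\theta_\alpha(s,t)}$ equals $1$ if $\alpha \in (1, 3/2]$ and equals $\frac{1}{2(\alpha-1)}$ if $\alpha \in (3/2, 2)$. -/

import Mathlib

open Real Set Filter Topology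

private lemma sinh_mul_le (c : ℝ) (hc0 : 0 ≤ c) (hc1 : c ≤ 1) (v : ℝ) (hv : 0 ≤ v) :
    Real.sinh (c * v) ≤ c * Real.sinh v := by
  have hder : ∀ x : ℝ, HasDerivAt (fun y => c * Real.sinh y - Real.sinh (c * y))
      (c * Real.cosh x - Real.cosh (c * x) * c) x := by
    intro x
    have h1 : HasDerivAt (fun y => c * Real.sinh y) (c * Real.cosh x) x :=
      (Real.hasDerivAt_sinh x).const_mul c
    have h2 : HasDerivAt (fun y : ℝ => c * y) c x := by
      simpa using (hasDerivAt_id x).const_mul c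
    have h3 : HasDerivAt (fun y => Real.sinh (c * y)) (Real.cosh (c * x) * c) x :=
      (Real.hasDerivAt_sinh (c * x)).comp x h2
    exact h1.sub h3
  have hmono : MonotoneOn (fun y => c * Real.sinh y - Real.sinh (c * y)) (Set.Ici 0) := by
    apply monotoneOn_of_deriv_nonneg (convex_Ici 0)
    · exact fun x _ => ((hder x).continuousAt).continuousWithinAt
    · exact fun x _ => (hder x).differentiableAt.differentiableWithinAt
    · intro x hx
      rw [(hder x).deriv]
      have hcc : Real.cosh (c * x) ≤ Real.cosh x := by
        rw [Real.cosh_le_cosh]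
        rw [interior_Ici] at hx
        have hx0 : 0 < x := hx
        rw [abs_of_nonneg (by positivity), abs_of_nonneg hx0.le]
        nlinarith
      nlinarith
  have h0 : (fun y => c * Real.sinh y - Real.sinh (c * y)) 0 = 0 := by simp
  have := hmono (Set.self_mem_Ici) (Set.mem_Ici.2 hv) hv
  simp only [h0] at this ⊢
  linarith [this]

private lemma key1 (α r : ℝ) (h1 : 1 < α) (h2 : α ≤ 3 / 2) (hr : 1 < r) :
    2 * (α - 1) * (r - 1) ≤ (r ^ (2 - α) + 1) * (r ^ (α - 1) - 1) := by
  have hr0 : 0 < r := by linarith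
  have hl : 0 < Real.log r := Real.log_pos hr
  set l := Real.log r with hldef
  set c : ℝ := 3 - 2 * α with hcdef
  have hc0 : 0 ≤ c := by simp [hcdef]; linarith
  have hc1 : c ≤ 1 := by simp [hcdef]; linarith
  have hs := sinh_mul_le c hc0 hc1 (l / 2) (by linarith)
  rw [Real.sinh_eq, Real.sinh_eq, Real.exp_neg, Real.exp_neg] at hs
  set a : ℝ := Real.exp (l / 2) with hadef
  set u : ℝ := Real.exp (c * (l / 2)) with hudef
  have ha : 0 < a := Real.exp_pos _
  have hu : 0 < u := Real.exp_pos _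
  have hq : r ^ (2 - α) = a * u := by
    rw [Real.rpow_def_of_pos hr0, hadef, hudef, ← Real.exp_add]
    congr 1
    rw [← hldef]; ring
  have hp : r ^ (α - 1) = a * u⁻¹ := by
    rw [Real.rpow_def_of_pos hr0, hadef, hudef, ← Real.exp_neg, ← Real.exp_add]
    congr 1
    rw [← hldef]; ring
  have hrr : r = a * a := by
    rw [hadef, ← Real.exp_add, show l / 2 + l / 2 = l by ring, hldef, Real.exp_log hr0]
  rw [hq, hp, hrr]
  have hs' : (u - u⁻¹) / 2 ≤ c * ((a - a⁻¹) / 2) := hs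
  have hua : u * u⁻¹ = 1 := mul_inv_cancel₀ hu.ne'
  have haa : a * a⁻¹ = 1 := mul_inv_cancel₀ ha.ne'
  nlinarith [mul_le_mul_of_nonneg_left hs' ha.le, ha, hu]

private lemma key2 (α r : ℝ) (h1 : 3 / 2 ≤ α) (h2 : α < 2) (hr : 1 < r) :
    r - 1 ≤ (r ^ (2 - α) + 1) * (r ^ (α - 1) - 1) := by
  have hr0 : 0 < r := by linarith
  have hqp : r ^ (2 - α) ≤ r ^ (α - 1) := by
    rw [Real.rpow_le_rpow_left_iff hr]
    linarith
  have hprod : r ^ (2 - α) * r ^ (α - 1) = r := by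
    rw [← Real.rpow_add hr0]
    norm_num
  nlinarith [hqp, hprod]

private lemma scale (α t r : ℝ) (ht : 0 < t) (hr : 0 < r) :
    ((r * t) ^ (2 - α) + t ^ (2 - α)) * ((r * t) ^ (α - 1) - t ^ (α - 1)) =
      t * ((r ^ (2 - α) + 1) * (r ^ (α - 1) - 1)) := by
  rw [Real.mul_rpow hr.le ht.le, Real.mul_rpow hr.le ht.le]
  have h : t ^ (2 - α) * t ^ (α - 1) = t := by
    rw [← Real.rpow_add ht]; norm_num
  linear_combination ((r ^ (2 - α) + 1) * (r ^ (α - 1) - 1)) * h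

private lemma lbA (α s t : ℝ) (h1 : 1 < α) (h2 : α ≤ 3 / 2) (ht : 0 < t) (hst : t < s) :
    2 * (α - 1) * (s - t) ≤ (s ^ (2 - α) + t ^ (2 - α)) * (s ^ (α - 1) - t ^ (α - 1)) := by
  have hr : 1 < s / t := (one_lt_div ht).2 hst
  have hs' : s = (s / t) * t := by field_simp
  rw [hs', scale α t (s / t) ht (by linarith)]
  have := mul_le_mul_of_nonneg_left (key1 α (s / t) h1 h2 hr) ht.le
  nlinarith [this]

private lemma lbB (α s t : ℝ) (h1 : 3 / 2 ≤ α) (h2 : α < 2) (ht : 0 < t) (hst : t < s) :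
    s - t ≤ (s ^ (2 - α) + t ^ (2 - α)) * (s ^ (α - 1) - t ^ (α - 1)) := by
  have hr : 1 < s / t := (one_lt_div ht).2 hst
  have hs' : s = (s / t) * t := by field_simp
  rw [hs', scale α t (s / t) ht (by linarith)]
  have := mul_le_mul_of_nonneg_left (key2 α (s / t) h1 h2 hr) ht.le
  nlinarith [this]

theorem stmt3 (α : ℝ) (hα : α ∈ Set.Ioo 1 2)
    (θ : ℝ → ℝ → ℝ)
    (hθ : ∀ s t : ℝ, 0 < s → 0 < t →
      θ s t = if s = t then s ^ (2 - α) / α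
              else ((α - 1) / α) * ((s - t) / (s ^ (α - 1) - t ^ (α - 1)))) :
    sInf {x : ℝ | ∃ s t : ℝ, 0 < s ∧ 0 < t ∧ x = (θ s s + θ t t) / (2 * θ s t)} =
      if α ≤ 3 / 2 then 1 else 1 / (2 * (α - 1)) := by
  obtain ⟨hα1, hα2⟩ := hα
  have hα0 : (0:ℝ) < α := by linarith
  have hαm1 : (0:ℝ) < α - 1 := by linarith
  set S := {x : ℝ | ∃ s t : ℝ, 0 < s ∧ 0 < t ∧ x = (θ s s + θ t t) / (2 * θ s t)} with hS
  -- value formula when s ≠ t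
  have hval : ∀ s t : ℝ, 0 < s → 0 < t → s ≠ t →
      (θ s s + θ t t) / (2 * θ s t) =
        ((s ^ (2 - α) + t ^ (2 - α)) * (s ^ (α - 1) - t ^ (α - 1))) / (2 * (α - 1) * (s - t)) := by
    intro s t hs ht hne
    have hne' : s ^ (α - 1) ≠ t ^ (α - 1) := by
      rcases hne.lt_or_gt with h | h
      · exact ne_of_lt (Real.rpow_lt_rpow hs.le h hαm1)
      · exact (ne_of_lt (Real.rpow_lt_rpow ht.le h hαm1)).symm
    rw [hθ s s hs hs, hθ t t ht ht, hθ s t hs ht, if_pos rfl, if_pos rfl, if_neg hne]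
    have h1 : s - t ≠ 0 := sub_ne_zero.2 hne
    have h2 : s ^ (α - 1) - t ^ (α - 1) ≠ 0 := sub_ne_zero.2 hne'
    have h3 : α ≠ 0 := hα0.ne'
    have h4 : α - 1 ≠ 0 := hαm1.ne'
    field_simp
  -- value when s = t
  have hval1 : ∀ s : ℝ, 0 < s → (θ s s + θ s s) / (2 * θ s s) = 1 := by
    intro s hs
    have hd : θ s s = s ^ (2 - α) / α := by rw [hθ s s hs hs, if_pos rfl]
    have hdpos : 0 < θ s s := by
      rw [hd]; exact div_pos (Real.rpow_pos_of_pos hs _) hα0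
    rw [div_eq_one_iff_eq (ne_of_gt (by linarith : (0:ℝ) < 2 * θ s s))]
    ring
  have hmem1 : (1:ℝ) ∈ S := ⟨1, 1, one_pos, one_pos, (hval1 1 one_pos).symm⟩
  rcases le_or_gt α (3 / 2) with hc | hc
  · -- case α ≤ 3/2 : infimum is 1
    rw [if_pos hc]
    have hlb : ∀ x ∈ S, (1:ℝ) ≤ x := by
      rintro x ⟨s, t, hs, ht, rfl⟩
      by_cases hst : s = t
      · subst hst; rw [hval1 s hs]
      · rw [hval s t hs ht hst]
        rcases Ne.lt_or_gt hst with h | h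
        · -- s < t : swap
          have hden : 0 < 2 * (α - 1) * (t - s) := mul_pos (by linarith) (by linarith)
          have hsw : ((s ^ (2 - α) + t ^ (2 - α)) * (s ^ (α - 1) - t ^ (α - 1))) /
              (2 * (α - 1) * (s - t)) =
              ((t ^ (2 - α) + s ^ (2 - α)) * (t ^ (α - 1) - s ^ (α - 1))) /
              (2 * (α - 1) * (t - s)) := by
            rw [show (s ^ (2 - α) + t ^ (2 - α)) * (s ^ (α - 1) - t ^ (α - 1)) =
                -((t ^ (2 - α) + s ^ (2 - α)) * (t ^ (α - 1) - s ^ (α - 1))) by ring,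
              show 2 * (α - 1) * (s - t) = -(2 * (α - 1) * (t - s)) by ring, neg_div_neg_eq]
          rw [hsw, le_div_iff₀ hden]
          have := lbA α t s hα1 hc hs h
          linarith
        · have hden : 0 < 2 * (α - 1) * (s - t) := mul_pos (by linarith) (by linarith)
          rw [le_div_iff₀ hden]
          have := lbA α s t hα1 hc ht h
          linarith
    exact le_antisymm (csInf_le ⟨1, hlb⟩ hmem1) (le_csInf ⟨1, hmem1⟩ hlb)
  · -- case 3/2 < α : infimum is 1/(2(α-1))
    rw [if_neg (not_le.2 hc)]
    set m : ℝ := 1 / (2 * (α - 1)) with hm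
    have hm1 : m ≤ 1 := by
      rw [hm, div_le_one (by positivity)]; linarith
    have hlb : ∀ x ∈ S, m ≤ x := by
      rintro x ⟨s, t, hs, ht, rfl⟩
      by_cases hst : s = t
      · subst hst; rw [hval1 s hs]; exact hm1
      · rw [hval s t hs ht hst]
        have hkey : ∀ u v : ℝ, 0 < v → v < u →
            m ≤ ((u ^ (2 - α) + v ^ (2 - α)) * (u ^ (α - 1) - v ^ (α - 1))) /
              (2 * (α - 1) * (u - v)) := by
          intro u v hv huv
          have hden : 0 < 2 * (α - 1) * (u - v) := mul_pos (by linarith) (by linarith)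
          rw [le_div_iff₀ hden]
          have h1 := lbB α u v hc.le hα2 hv huv
          have h2 : m * (2 * (α - 1) * (u - v)) = u - v := by
            rw [hm]; field_simp
          linarith
        rcases Ne.lt_or_gt hst with h | h
        · have hsw : ((s ^ (2 - α) + t ^ (2 - α)) * (s ^ (α - 1) - t ^ (α - 1))) /
              (2 * (α - 1) * (s - t)) =
              ((t ^ (2 - α) + s ^ (2 - α)) * (t ^ (α - 1) - s ^ (α - 1))) /
              (2 * (α - 1) * (t - s)) := by
            rw [show (s ^ (2 - α) + t ^ (2 - α)) * (s ^ (α - 1) - t ^ (α - 1)) =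
                -((t ^ (2 - α) + s ^ (2 - α)) * (t ^ (α - 1) - s ^ (α - 1))) by ring,
              show 2 * (α - 1) * (s - t) = -(2 * (α - 1) * (t - s)) by ring, neg_div_neg_eq]
          rw [hsw]
          exact hkey t s hs h
        · exact hkey s t ht h
    have hbdd : BddBelow S := ⟨m, hlb⟩
    -- upper bound via limit
    set E : ℝ → ℝ := fun r => ((r ^ (2 - α) + 1) * (r ^ (α - 1) - 1)) / (2 * (α - 1) * (r - 1))
      with hE
    have hmemE : ∀ r : ℝ, 1 < r → E r ∈ S := by
      intro r hr
      refine ⟨r, 1, by linarith, one_pos, ?_⟩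
      rw [hval r 1 (by linarith) one_pos (by linarith : r ≠ 1)]
      simp [hE, Real.one_rpow]
    set D : ℝ → ℝ := fun r => (r ^ (α - 1) - r ^ (2 - α)) / (2 * (α - 1) * (r - 1)) with hD
    have hEeq : ∀ r : ℝ, 1 < r → E r = m + D r := by
      intro r hr
      have hr0 : 0 < r := by linarith
      have hprod : r ^ (2 - α) * r ^ (α - 1) = r := by
        rw [← Real.rpow_add hr0]; norm_num
      have hden : (2 * (α - 1) * (r - 1)) ≠ 0 := ne_of_gt (mul_pos (by linarith) (by linarith))
      rw [hE, hD, hm]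
      have hr1 : r - 1 ≠ 0 := (by linarith : (0:ℝ) < r - 1).ne'
      field_simp
      ring_nf
      ring_nf at hprod
      nlinarith [hprod]
    -- D tends to 0
    have hDlim : Tendsto D atTop (𝓝 0) := by
      have hg : Tendsto (fun r : ℝ => r ^ (α - 2) / (α - 1)) atTop (𝓝 0) := by
        have := (tendsto_rpow_neg_atTop (by linarith : (0:ℝ) < 2 - α)).div_const (α - 1)
        simpa [show -(2 - α) = α - 2 by ring] using this
      apply tendsto_of_tendsto_of_tendsto_of_le_of_le' tendsto_const_nhds hg
      · filter_upwards [eventually_ge_atTop (2:ℝ)] with r hr2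
        have hr : 1 < r := by linarith
        have hr0 : 0 < r := by linarith
        have hqp : r ^ (2 - α) ≤ r ^ (α - 1) := by
          rw [Real.rpow_le_rpow_left_iff hr]; linarith
        have hden : 0 < 2 * (α - 1) * (r - 1) := mul_pos (by linarith) (by linarith)
        exact div_nonneg (by linarith) hden.le
      · filter_upwards [eventually_ge_atTop (2:ℝ)] with r hr2
        have hr : 1 < r := by linarith
        have hr0 : 0 < r := by linarith
        have hden : 0 < 2 * (α - 1) * (r - 1) := mul_pos (by linarith) (by linarith)
        rw [hD, div_le_div_iff₀ hden (by linarith : (0:ℝ) < α - 1)]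
        have hx : r ^ (α - 2) * r = r ^ (α - 1) := by
          rw [← Real.rpow_add_one hr0.ne']; congr 1; ring
        have h1 : (0:ℝ) ≤ r ^ (α - 2) := Real.rpow_nonneg hr0.le _
        have h2 : (0:ℝ) ≤ r ^ (2 - α) := Real.rpow_nonneg hr0.le _
        nlinarith [mul_nonneg h1 (by linarith : (0:ℝ) ≤ r - 2), hx]
    have hElim : Tendsto E atTop (𝓝 m) := by
      have : Tendsto (fun r => m + D r) atTop (𝓝 (m + 0)) := tendsto_const_nhds.add hDlim
      rw [add_zero] at this
      apply this.congr'
      filter_upwards [eventually_gt_atTop (1:ℝ)] with r hr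
      exact (hEeq r hr).symm
    have hub : sInf S ≤ m := by
      apply ge_of_tendsto hElim
      filter_upwards [eventually_gt_atTop (1:ℝ)] with r hr
      exact csInf_le hbdd (hmemE r hr)
    exact le_antisymm hub (le_csInf ⟨1, hmem1⟩ hlb)
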